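/- Let N be a finite set and (x,y) ∈ [0,1]^N × ℝ₊^N. Define Ψ(x,y) = sup over S ⊆ N and α ∈ ℝ₊^N of [ −m_α(S)²/4 − Σ_{i ∈ N\S} max(α_i² − m_α(S)², 0)·x_i/4 + Σ_{i∈N} α_i y_i ]. Then there exists a (possibly empty) set L ⊆ N such that (a) x(N\L) ≤ 1; (b) y(L)/(1−x(N\L)) < y_i/x_i for all i ∈ N\L; (c) y(L)/(1−x(N\L)) ≥ y_i/x_i for all i ∈ L; and Ψ(x,y) = y(L)²/(1−x(N\L)) + Σ_{i ∈ N\L} y_i²/x_i. -/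

import Mathlib

open Finset

noncomputable section

variable {ι : Type*}

/-- Extended-real ratio with the conventions `a/0 = +∞` for `a > 0` and `0/0 = 0`
(and `a/0 = −∞` for `a < 0`, which never occurs in the statements below). -/
def ratio (a b : ℝ) : EReal :=
  if b = 0 then (if 0 < a then (⊤ : EReal) else if a < 0 then (⊥ : EReal) else (0 : EReal))
  else ((a / b : ℝ) : EReal)

/-- `m_α(S) = max_{i ∈ S} α_i` with the convention `m_α(∅) = 0`. -/
def mAlpha (α : ι → ℝ) (S : Finset ι) : ℝ := S.fold max 0 α

/-- The maximum lifting function for `X₊`: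
`Ψ(x,y) = sup_{S ⊆ N, α ∈ ℝ₊^N} [−m_α(S)²/4 − ∑_{i∈N\S} (α_i²−m_α(S)²)₊ x_i/4 + α·y]`. -/
def Psi [Fintype ι] [DecidableEq ι] (x y : ι → ℝ) : EReal :=
  ⨆ (S : Finset ι) (α : ι → ℝ) (_ : ∀ i, 0 ≤ α i),
    ((-(mAlpha α S) ^ 2 / 4
      - (∑ i ∈ Finset.univ \ S, max ((α i) ^ 2 - (mAlpha α S) ^ 2) 0 * x i / 4)
      + ∑ i, α i * y i : ℝ) : EReal)

set_option maxHeartbeats 1600000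

lemma stmt15_coe_finset_sum {κ : Type*} (s : Finset κ) (f : κ → ℝ) :
    ((∑ i ∈ s, f i : ℝ) : EReal) = ∑ i ∈ s, ((f i : ℝ) : EReal) :=
  map_sum (⟨⟨Real.toEReal, EReal.coe_zero⟩, EReal.coe_add⟩ : ℝ →+ EReal) f s

lemma stmt15_exists_tL {ι : Type*} [Fintype ι] [DecidableEq ι]
    (x y : ι → ℝ) (hx : ∀ i, 0 ≤ x i ∧ x i ≤ 1) (hy : ∀ i, 0 ≤ y i) :
    ∃ (t : ℝ) (L : Finset ι), 0 ≤ t ∧ (∀ i, i ∈ L ↔ y i ≤ t * x i) ∧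
      0 < 1 - ∑ i ∈ univ \ L, x i ∧
      (∑ i ∈ L, y i) = t * (1 - ∑ i ∈ univ \ L, x i) ∧
      (∀ s, 0 ≤ s → s ≤ t → s ≤ ∑ i, min (s * x i) (y i)) := by
  classical
  set G : ℝ → ℝ := fun t => t - ∑ i, min (t * x i) (y i) with hGdef
  have hG0 : G 0 = 0 := by
    simp only [hGdef, zero_mul]
    have : ∀ i ∈ (univ : Finset ι), min (0:ℝ) (y i) = 0 := fun i _ => min_eq_left (hy i)
    rw [Finset.sum_congr rfl this]
    simp
  set A : Set ℝ := {t | 0 ≤ t ∧ ∀ s, 0 ≤ s → s ≤ t → G s ≤ 0} with hAdef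
  have h0A : (0:ℝ) ∈ A := by
    refine ⟨le_refl _, fun s hs hs' => ?_⟩
    have : s = 0 := le_antisymm hs' hs
    rw [this, hG0]
  have hbdd : BddAbove A := by
    refine ⟨∑ i, y i, fun t ht => ?_⟩
    have h1 : G t ≤ 0 := ht.2 t ht.1 le_rfl
    have h2 : ∑ i, min (t * x i) (y i) ≤ ∑ i, y i :=
      Finset.sum_le_sum fun i _ => min_le_right _ _
    simp only [hGdef] at h1; linarith
  set T : ℝ := sSup A with hTdef
  have ht0 : 0 ≤ T := le_csSup hbdd h0A
  have hGcont : Continuous G := by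
    apply continuous_id.sub
    exact continuous_finset_sum _ fun i _ => (continuous_id.mul continuous_const).min continuous_const
  have hGt : ∀ s, 0 ≤ s → s ≤ T → G s ≤ 0 := by
    have hlt : ∀ s, 0 ≤ s → s < T → G s ≤ 0 := by
      intro s hs hsT
      obtain ⟨a, haA, hsa⟩ := exists_lt_of_lt_csSup ⟨0, h0A⟩ hsT
      exact haA.2 s hs hsa.le
    intro s hs hsT
    rcases lt_or_eq_of_le hsT with h | h
    · exact hlt s hs h
    · subst h
      rcases eq_or_lt_of_le ht0 with h0 | h0
      · rw [← h0, hG0]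
      · have hclosed : IsClosed {z : ℝ | G z ≤ 0} := isClosed_le hGcont continuous_const
        have hsub : Set.Ico (0:ℝ) T ⊆ {z : ℝ | G z ≤ 0} := fun z hz => hlt z hz.1 hz.2
        have hIcc : Set.Icc (0:ℝ) T ⊆ {z : ℝ | G z ≤ 0} := by
          rw [← closure_Ico (ne_of_lt h0)]
          exact closure_minimal hsub hclosed
        exact hIcc ⟨ht0, le_refl _⟩
  set L : Finset ι := univ.filter (fun i => y i ≤ T * x i) with hLdef
  have hLmem : ∀ i, i ∈ L ↔ y i ≤ T * x i := by
    intro i; simp [hLdef]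
  have hLnot : ∀ i, i ∉ L → T * x i < y i := by
    intro i hi; by_contra h; exact hi ((hLmem i).2 (not_lt.1 h))
  set d : ℝ := 1 - ∑ i ∈ univ \ L, x i with hddef
  set yL : ℝ := ∑ i ∈ L, y i with hyLdef
  set B : Finset ι := (univ \ L).filter (fun i => 0 < x i) with hBdef
  set u : ℝ := if hB : B.Nonempty then B.inf' hB (fun i => y i / x i) else T + 1 with hudef
  have hu1 : T < u := by
    rw [hudef]
    split_ifs with hB
    · rw [Finset.lt_inf'_iff]
      intro i hi
      rw [hBdef, mem_filter] at hi
      have := hLnot i (by rw [mem_sdiff] at hi; exact hi.1.2)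
      exact (lt_div_iff₀ hi.2).2 (by linarith [this])
    · linarith
  have hu2 : ∀ s, 0 ≤ s → s < u → ∀ i, i ∉ L → s * x i < y i := by
    intro s hs hsu i hi
    rcases eq_or_lt_of_le (hx i).1 with hxi | hxi
    · rw [← hxi, mul_zero]
      have := hLnot i hi
      nlinarith [(hx i).1]
    · have hiB : i ∈ B := by
        rw [hBdef, mem_filter, mem_sdiff]
        exact ⟨⟨mem_univ i, hi⟩, hxi⟩
      have : u ≤ y i / x i := by
        rw [hudef]
        split_ifs with hB
        · exact Finset.inf'_le _ hiB
        · exact absurd ⟨i, hiB⟩ hB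
      have := lt_of_lt_of_le hsu this
      exact (lt_div_iff₀ hxi).1 this
  have hform : ∀ σ, T ≤ σ → σ < u → G σ = σ * d - yL := by
    intro σ hσ1 hσ2
    have hsplit : ∑ i ∈ univ \ L, min (σ * x i) (y i) + ∑ i ∈ L, min (σ * x i) (y i)
        = ∑ i, min (σ * x i) (y i) := Finset.sum_sdiff (subset_univ L)
    have h1 : ∀ i ∈ L, min (σ * x i) (y i) = y i := by
      intro i hi
      refine min_eq_right ?_
      have := (hLmem i).1 hi
      nlinarith [(hx i).1]
    have h2 : ∀ i ∈ univ \ L, min (σ * x i) (y i) = σ * x i := by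
      intro i hi
      rw [mem_sdiff] at hi
      exact min_eq_left (hu2 σ (le_trans ht0 hσ1) hσ2 i hi.2).le
    rw [hGdef]
    simp only
    rw [← hsplit, Finset.sum_congr rfl h1, Finset.sum_congr rfl h2, ← Finset.mul_sum]
    rw [hddef, hyLdef]; ring
  have hTd : T * d ≤ yL := by
    have := hGt T ht0 le_rfl
    rw [hform T le_rfl hu1] at this; linarith
  have key : ∀ s, T < s → s < u → (∀ σ, T < σ → σ ≤ s → σ * d ≤ yL) → False := by
    intro s hs1 hs2 hσ
    have hsA : s ∈ A := by
      refine ⟨by linarith, fun σ h0 hσs => ?_⟩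
      rcases le_or_gt σ T with h | h
      · exact hGt σ h0 h
      · rw [hform σ h.le (lt_of_le_of_lt hσs hs2)]
        linarith [hσ σ h hσs]
    exact absurd (le_csSup hbdd hsA) (not_le.2 hs1)
  have hd : 0 < d := by
    by_contra h
    push_neg at h
    exact key ((T + u)/2) (by linarith) (by linarith)
      (fun σ h1 h2 => le_trans (by nlinarith) hTd)
  have hEq : yL = T * d := by
    rcases eq_or_lt_of_le hTd with h | h
    · exact h.symm
    · exfalso
      refine key (min ((T + u)/2) ((T + yL/d)/2)) ?_ ?_ ?_
      · refine lt_min (by linarith) ?_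
        have : T < yL / d := (lt_div_iff₀ hd).2 h
        linarith
      · exact lt_of_le_of_lt (min_le_left _ _) (by linarith)
      · intro σ h1 h2
        have h3 : σ ≤ (T + yL/d)/2 := le_trans h2 (min_le_right _ _)
        have : T < yL / d := (lt_div_iff₀ hd).2 h
        have h4 : σ < yL / d := by linarith
        nlinarith [(div_mul_cancel₀ yL (ne_of_gt hd))]
  refine ⟨T, L, ht0, hLmem, hd, hEq, fun s hs hsT => ?_⟩
  have := hGt s hs hsT
  rw [hGdef] at this
  simp only at this
  linarith

lemma stmt15_upper {ι : Type*} [Fintype ι] [DecidableEq ι]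
    (x y : ι → ℝ) (hx : ∀ i, 0 ≤ x i ∧ x i ≤ 1) (hy : ∀ i, 0 ≤ y i)
    (hx0 : ∀ i, x i = 0 → y i = 0)
    (t : ℝ) (ht : 0 ≤ t) (L : Finset ι)
    (hL : ∀ i, i ∈ L ↔ y i ≤ t * x i)
    (hd : 0 < 1 - ∑ i ∈ univ \ L, x i)
    (hyL : ∑ i ∈ L, y i = t * (1 - ∑ i ∈ univ \ L, x i))
    (hG : ∀ s, 0 ≤ s → s ≤ t → s ≤ ∑ i, min (s * x i) (y i))
    (S : Finset ι) (α : ι → ℝ) (hα : ∀ i, 0 ≤ α i) :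
    -(mAlpha α S) ^ 2 / 4 - (∑ i ∈ univ \ S, max ((α i)^2 - (mAlpha α S)^2) 0 * x i / 4)
      + ∑ i, α i * y i
      ≤ t^2 * (1 - ∑ i ∈ univ \ L, x i) + ∑ i ∈ univ \ L, (y i)^2 / x i := by
  classical
  set m : ℝ := mAlpha α S with hm
  have hm0 : 0 ≤ m := by
    rw [hm, mAlpha]; exact (Finset.le_fold_max _).2 (Or.inl le_rfl)
  have hmS : ∀ i ∈ S, α i ≤ m := by
    intro i hi
    rw [hm, mAlpha]; exact (Finset.le_fold_max _).2 (Or.inr ⟨i, hi, le_rfl⟩)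
  set s : ℝ := m / 2 with hs
  have hs0 : 0 ≤ s := by positivity
  set q : ι → ℝ := fun i => if x i = 0 then 0 else (max (y i - s * x i) 0)^2 / x i with hq
  have hq0 : ∀ i, 0 ≤ q i := by
    intro i
    rw [hq]; dsimp only
    split_ifs with h
    · exact le_refl 0
    · exact div_nonneg (by positivity) (hx i).1
  have hxL : ∀ i, i ∉ L → 0 < x i := by
    intro i hi
    have h1 : t * x i < y i := by
      by_contra hc; exact hi ((hL i).2 (not_lt.1 hc))
    rcases eq_or_lt_of_le (hx i).1 with h | h
    · exfalso
      have hy0 := hx0 i h.symm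
      rw [← h, mul_zero, hy0] at h1
      exact lt_irrefl 0 h1
    · exact h
  have step1 : ∀ i ∈ S, α i * y i ≤ m * y i + q i := by
    intro i hi
    have := mul_le_mul_of_nonneg_right (hmS i hi) (hy i)
    linarith [hq0 i]
  have step2 : ∀ i ∈ univ \ S,
      α i * y i - max ((α i)^2 - m^2) 0 * x i / 4 ≤ m * y i + q i := by
    intro i _
    rcases eq_or_lt_of_le (hx i).1 with hxi | hxi
    · have hyi := hx0 i hxi.symm
      rw [← hxi, hyi]
      have : q i = 0 := by rw [hq]; simp [← hxi]
      rw [this]; ring_nf; exact le_refl 0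
    · rcases le_or_gt (α i) m with hαm | hαm
      · have h1 : (α i)^2 ≤ m^2 := by nlinarith [hα i]
        have h2 : max ((α i)^2 - m^2) 0 = 0 := max_eq_right (by linarith)
        rw [h2]
        have := mul_le_mul_of_nonneg_right hαm (hy i)
        simp only [zero_mul, zero_div, sub_zero]
        linarith [hq0 i]
      · have h2 : max ((α i)^2 - m^2) 0 = (α i)^2 - m^2 :=
          max_eq_left (by nlinarith)
        rw [h2]
        rcases le_or_gt (y i - s * x i) 0 with hys | hys
        · have hqi : q i = 0 := by
            rw [hq]; dsimp only
            rw [if_neg (ne_of_gt hxi), max_eq_right hys]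
            simp
          rw [hqi, add_zero]
          have hysx : y i ≤ m / 2 * x i := by rw [hs] at hys; linarith
          have e1 : (α i - m) * y i ≤ (α i - m) * (m / 2 * x i) :=
            mul_le_mul_of_nonneg_left hysx (by linarith)
          have e2 : (α i - m) * (m / 2 * x i) ≤ (α i - m) * ((α i + m) / 4 * x i) :=
            mul_le_mul_of_nonneg_left (by nlinarith [(hx i).1]) (by linarith)
          nlinarith [e1, e2]
        · have hqi : q i = (y i - s * x i)^2 / x i := by
            rw [hq]; dsimp only
            rw [if_neg (ne_of_gt hxi), max_eq_left hys.le]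
          rw [hqi]
          rw [← sub_nonneg]
          have hkey : m * y i + (y i - s * x i)^2 / x i
              - (α i * y i - ((α i)^2 - m^2) * x i / 4)
              = (y i - α i * x i / 2)^2 / x i := by
            field_simp
            rw [hs]
            ring
          rw [hkey]
          positivity
  have hsum1 : -m ^ 2 / 4 - (∑ i ∈ univ \ S, max ((α i)^2 - m^2) 0 * x i / 4)
      + ∑ i, α i * y i ≤ -s^2 + ∑ i, (m * y i + q i) := by
    have hsplitS : ∑ i ∈ univ \ S, (α i * y i) + ∑ i ∈ S, (α i * y i) = ∑ i, α i * y i :=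
      Finset.sum_sdiff (subset_univ S)
    have hA : ∑ i ∈ univ \ S, (α i * y i - max ((α i)^2 - m^2) 0 * x i / 4)
        ≤ ∑ i ∈ univ \ S, (m * y i + q i) := Finset.sum_le_sum step2
    have hB : ∑ i ∈ S, (α i * y i) ≤ ∑ i ∈ S, (m * y i + q i) := Finset.sum_le_sum step1
    have hC : ∑ i ∈ univ \ S, (m * y i + q i) + ∑ i ∈ S, (m * y i + q i)
        = ∑ i, (m * y i + q i) := Finset.sum_sdiff (subset_univ S)
    have hD : ∑ i ∈ univ \ S, (α i * y i - max ((α i)^2 - m^2) 0 * x i / 4)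
        = ∑ i ∈ univ \ S, (α i * y i) - ∑ i ∈ univ \ S, (max ((α i)^2 - m^2) 0 * x i / 4) :=
      Finset.sum_sub_distrib _ _
    have hE : -m^2/4 = -s^2 := by rw [hs]; ring
    linarith
  have hsum2 : ∑ i, (m * y i + q i) = 2 * s * ∑ i, y i + ∑ i, q i := by
    rw [Finset.sum_add_distrib, ← Finset.mul_sum]
    have : m = 2 * s := by rw [hs]; ring
    rw [this]
  set d : ℝ := 1 - ∑ i ∈ univ \ L, x i with hddef
  have hxd : ∑ i ∈ univ \ L, x i = 1 - d := by rw [hddef]; ring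
  have hsplitL : ∀ f : ι → ℝ, ∑ i ∈ univ \ L, f i + ∑ i ∈ L, f i = ∑ i, f i :=
    fun f => Finset.sum_sdiff (subset_univ L)
  set Yout : ℝ := ∑ i ∈ univ \ L, y i with hYout
  set Qout : ℝ := ∑ i ∈ univ \ L, (y i)^2 / x i with hQout
  have hY : ∑ i, y i = Yout + t * d := by
    rw [← hsplitL y, hyL]
  have houtL : ∑ i ∈ univ \ L, q i
      ≤ ∑ i ∈ univ \ L, ((y i)^2 / x i - 2 * s * y i + s^2 * x i) := by
    refine Finset.sum_le_sum fun i hi => ?_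
    rw [mem_sdiff] at hi
    have hxi := hxL i hi.2
    have h1 : q i = (max (y i - s * x i) 0)^2 / x i := by
      rw [hq]; dsimp only; rw [if_neg (ne_of_gt hxi)]
    have h2 : (max (y i - s * x i) 0)^2 ≤ (y i - s * x i)^2 := by
      rcases le_or_gt (y i - s * x i) 0 with h | h
      · rw [max_eq_right h]; simpa using sq_nonneg (y i - s * x i)
      · rw [max_eq_left h.le]
    have h3 : (y i - s * x i)^2 / x i = (y i)^2 / x i - 2 * s * y i + s^2 * x i := by
      field_simp; ring
    rw [h1, ← h3]
    exact div_le_div_of_nonneg_right h2 (hx i).1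
  have hexp : ∑ i ∈ univ \ L, ((y i)^2 / x i - 2 * s * y i + s^2 * x i)
      = Qout - 2 * s * Yout + s^2 * (1 - d) := by
    rw [Finset.sum_add_distrib, Finset.sum_sub_distrib, ← Finset.mul_sum, ← Finset.mul_sum, hxd]
  have hinL : ∑ i ∈ L, q i ≤ (max (t - s) 0)^2 * d := by
    rcases le_or_gt s t with hst | hst
    · have hts : max (t - s) 0 = t - s := max_eq_left (by linarith)
      rw [hts]
      have perL : ∀ i ∈ L, q i ≤ (t - s) * max (y i - s * x i) 0 := by
        intro i hi
        rcases eq_or_lt_of_le (hx i).1 with hxi | hxi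
        · have : q i = 0 := by rw [hq]; simp [← hxi]
          rw [this]
          exact mul_nonneg (by linarith) (le_max_right _ _)
        · have h1 : q i = (max (y i - s * x i) 0)^2 / x i := by
            rw [hq]; dsimp only; rw [if_neg (ne_of_gt hxi)]
          have h2 : max (y i - s * x i) 0 ≤ (t - s) * x i := by
            refine max_le ?_ (by nlinarith)
            have := (hL i).1 hi
            nlinarith
          rw [h1, div_le_iff₀ hxi]
          have h4 : (0:ℝ) ≤ max (y i - s * x i) 0 := le_max_right _ _
          calc (max (y i - s * x i) 0)^2
              = max (y i - s * x i) 0 * max (y i - s * x i) 0 := sq (max (y i - s * x i) 0)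
            _ ≤ ((t-s) * x i) * max (y i - s * x i) 0 := mul_le_mul_of_nonneg_right h2 h4
            _ = (t - s) * max (y i - s * x i) 0 * x i := by ring
      have hmax : ∀ i ∈ L, max (y i - s * x i) 0 = y i - min (y i) (s * x i) := by
        intro i _
        rcases le_total (s * x i) (y i) with h | h
        · rw [min_eq_right h, max_eq_left (by linarith)]
        · rw [min_eq_left h, max_eq_right (by linarith)]; ring
      have hsummax : ∑ i ∈ L, max (y i - s * x i) 0 ≤ (t - s) * d := by
        rw [Finset.sum_congr rfl hmax, Finset.sum_sub_distrib]
        have hGs := hG s hs0 hst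
        have hout : ∀ i ∈ univ \ L, min (s * x i) (y i) = s * x i := by
          intro i hi
          rw [mem_sdiff] at hi
          refine min_eq_left ?_
          have h1 : t * x i < y i := by
            by_contra hc; exact hi.2 ((hL i).2 (not_lt.1 hc))
          nlinarith [(hx i).1]
        have hsp := hsplitL (fun i => min (s * x i) (y i))
        rw [Finset.sum_congr rfl hout] at hsp
        have hcomm : ∀ i ∈ L, min (y i) (s * x i) = min (s * x i) (y i) :=
          fun i _ => min_comm _ _
        rw [Finset.sum_congr rfl hcomm]
        rw [← Finset.mul_sum, hxd] at hsp
        have h5 : s - s * (1 - d) ≤ ∑ i ∈ L, min (s * x i) (y i) := by linarith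
        have h6 : s - s * (1 - d) = s * d := by ring
        rw [h6] at h5
        have h7 : ∑ i ∈ L, y i = t * d := hyL
        linarith
      calc ∑ i ∈ L, q i ≤ ∑ i ∈ L, (t - s) * max (y i - s * x i) 0 :=
            Finset.sum_le_sum perL
        _ = (t - s) * ∑ i ∈ L, max (y i - s * x i) 0 := by rw [Finset.mul_sum]
        _ ≤ (t - s) * ((t - s) * d) := mul_le_mul_of_nonneg_left hsummax (by linarith)
        _ = (t - s)^2 * d := by ring
    · have hall : ∀ i ∈ L, q i = 0 := by
        intro i hi
        rcases eq_or_lt_of_le (hx i).1 with hxi | hxi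
        · rw [hq]; simp [← hxi]
        · have h1 := (hL i).1 hi
          have h2 : y i - s * x i ≤ 0 := by nlinarith
          rw [hq]; dsimp only
          rw [if_neg (ne_of_gt hxi), max_eq_right h2]
          simp
      rw [Finset.sum_congr rfl hall]
      rw [Finset.sum_const, smul_zero]
      exact mul_nonneg (sq_nonneg _) hd.le
  have c1 : ∑ i, q i ≤ (Qout - 2 * s * Yout + s^2 * (1 - d)) + (max (t - s) 0)^2 * d := by
    rw [← hsplitL q]
    have := houtL
    rw [hexp] at this
    linarith [hinL]
  calc -m ^ 2 / 4 - (∑ i ∈ univ \ S, max ((α i)^2 - m^2) 0 * x i / 4) + ∑ i, α i * y i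
      ≤ -s^2 + ∑ i, (m * y i + q i) := hsum1
    _ = -s^2 + 2 * s * (Yout + t * d) + ∑ i, q i := by rw [hsum2, hY]; ring
    _ ≤ -s^2 + 2 * s * (Yout + t * d)
        + ((Qout - 2 * s * Yout + s^2 * (1 - d)) + (max (t - s) 0)^2 * d) := by linarith [c1]
    _ ≤ t^2 * d + Qout := by
        rcases le_or_gt s t with hst | hst
        · rw [max_eq_left (by linarith : (0:ℝ) ≤ t - s)]
          apply le_of_eq; ring
        · rw [max_eq_right (by linarith : t - s ≤ (0:ℝ))]
          nlinarith [mul_nonneg hd.le (sq_nonneg (s - t))]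

lemma stmt15_lower_val {ι : Type*} [Fintype ι] [DecidableEq ι]
    (x y : ι → ℝ) (hx : ∀ i, 0 ≤ x i ∧ x i ≤ 1) (hy : ∀ i, 0 ≤ y i)
    (t : ℝ) (ht : 0 ≤ t) (L : Finset ι)
    (hL : ∀ i, i ∈ L ↔ y i ≤ t * x i)
    (hd : 0 < 1 - ∑ i ∈ univ \ L, x i)
    (hyL : ∑ i ∈ L, y i = t * (1 - ∑ i ∈ univ \ L, x i))
    (hxL : ∀ i, i ∉ L → 0 < x i) :
    ∃ α : ι → ℝ, (∀ i, 0 ≤ α i) ∧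
      -(mAlpha α L) ^ 2 / 4
        - (∑ i ∈ univ \ L, max ((α i)^2 - (mAlpha α L)^2) 0 * x i / 4)
        + ∑ i, α i * y i
      = t^2 * (1 - ∑ i ∈ univ \ L, x i) + ∑ i ∈ univ \ L, (y i)^2 / x i := by
  classical
  set d : ℝ := 1 - ∑ i ∈ univ \ L, x i with hddef
  refine ⟨fun i => if i ∈ L then 2*t else 2*(y i)/(x i), fun i => ?_, ?_⟩
  · dsimp only
    split_ifs with h
    · linarith
    · exact div_nonneg (by linarith [hy i]) (hxL i h).le
  · set α : ι → ℝ := fun i => if i ∈ L then 2*t else 2*(y i)/(x i) with hα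
    have hmA : mAlpha α L = 2*t := by
      refine le_antisymm ?_ ?_
      · rw [mAlpha]
        refine (Finset.fold_max_le _).2 ⟨by linarith, fun i hi => ?_⟩
        rw [hα]; simp [hi]
      · rcases L.eq_empty_or_nonempty with h | ⟨i, hi⟩
        · have ht0 : t = 0 := by
            rw [h] at hyL
            simp at hyL
            rcases hyL with h1 | h1
            · exact h1
            · rw [h] at hddef; linarith
          rw [h, mAlpha, Finset.fold_empty, ht0]
          norm_num
        · rw [mAlpha]
          refine (Finset.le_fold_max _).2 (Or.inr ⟨i, hi, ?_⟩)
          rw [hα]; simp [hi]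
    rw [hmA]
    have hpen : ∀ i ∈ univ \ L, max ((α i)^2 - (2*t)^2) 0 * x i / 4
        = (y i)^2 / x i - t^2 * x i := by
      intro i hi
      rw [mem_sdiff] at hi
      have hxi := hxL i hi.2
      have hty : t * x i < y i := by
        by_contra hc; exact hi.2 ((hL i).2 (not_lt.1 hc))
      have hαi : α i = 2*(y i)/(x i) := by rw [hα]; simp [hi.2]
      rw [hαi]
      have hsq : (2*(y i)/(x i))^2 - (2*t)^2 ≥ 0 := by
        rw [ge_iff_le, sub_nonneg, div_pow]
        rw [le_div_iff₀ (by positivity)]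
        nlinarith [mul_nonneg ht (hx i).1]
      rw [max_eq_left hsq]
      field_simp
      ring
    have hαy : ∑ i, α i * y i = 2*t*(t*d) + ∑ i ∈ univ \ L, 2*(y i)^2/(x i) := by
      have hsplit : ∑ i ∈ univ \ L, (α i * y i) + ∑ i ∈ L, (α i * y i) = ∑ i, α i * y i :=
        Finset.sum_sdiff (subset_univ L)
      have h1 : ∀ i ∈ L, α i * y i = 2*t*y i := by
        intro i hi; rw [hα]; simp [hi]
      have h2 : ∀ i ∈ univ \ L, α i * y i = 2*(y i)^2/(x i) := by
        intro i hi
        rw [mem_sdiff] at hi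
        have hxi := hxL i hi.2
        rw [hα]; simp only [hi.2, if_neg, if_false]
        field_simp
      rw [← hsplit, Finset.sum_congr rfl h1, Finset.sum_congr rfl h2, ← Finset.mul_sum, hyL]
      ring
    rw [Finset.sum_congr rfl hpen, hαy, Finset.sum_sub_distrib]
    have h3 : ∑ i ∈ univ \ L, t^2 * x i = t^2 * (1 - d) := by
      rw [← Finset.mul_sum]
      congr 1
      rw [hddef]; ring
    have h4 : ∑ i ∈ univ \ L, 2*(y i)^2/(x i) = 2 * ∑ i ∈ univ \ L, (y i)^2/(x i) := by
      rw [Finset.mul_sum]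
      exact Finset.sum_congr rfl fun i _ => by ring
    rw [h3, h4]
    ring

/-- Ψ in the original space of variables.
For every `(x,y) ∈ [0,1]^N × ℝ₊^N` there is a (possibly empty) set `L ⊆ N` with
(a) `x(N\L) ≤ 1`, (b) `y(L)/(1−x(N\L)) < y_i/x_i` for `i ∈ N\L`,
(c) `y(L)/(1−x(N\L)) ≥ y_i/x_i` for `i ∈ L`, and
`Ψ(x,y) = y(L)²/(1−x(N\L)) + ∑_{i ∈ N\L} y_i²/x_i`. -/
theorem stmt_15 {ι : Type*} [Fintype ι] [DecidableEq ι]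
    (x y : ι → ℝ) (hx : ∀ i, 0 ≤ x i ∧ x i ≤ 1) (hy : ∀ i, 0 ≤ y i) :
    ∃ L : Finset ι,
      ((∑ i ∈ Finset.univ \ L, x i) ≤ 1) ∧
      (∀ i ∈ Finset.univ \ L,
        ratio (∑ j ∈ L, y j) (1 - ∑ j ∈ Finset.univ \ L, x j) < ratio (y i) (x i)) ∧
      (∀ i ∈ L,
        ratio (y i) (x i) ≤ ratio (∑ j ∈ L, y j) (1 - ∑ j ∈ Finset.univ \ L, x j)) ∧
      Psi x y = ratio ((∑ i ∈ L, y i) ^ 2) (1 - ∑ i ∈ Finset.univ \ L, x i)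
          + ∑ i ∈ Finset.univ \ L, ratio ((y i) ^ 2) (x i) := by
  classical
  obtain ⟨t, L, ht, hL, hd, hyL, hG⟩ := stmt15_exists_tL x y hx hy
  have hdne : (1 - ∑ j ∈ univ \ L, x j) ≠ 0 := ne_of_gt hd
  have hnotL : ∀ i, i ∉ L → t * x i < y i := by
    intro i hi; by_contra h; exact hi ((hL i).2 (not_lt.1 h))
  have ratio_d : ratio (∑ j ∈ L, y j) (1 - ∑ j ∈ univ \ L, x j) = ((t : ℝ) : EReal) := by
    rw [ratio, if_neg hdne]
    congr 1
    rw [hyL, mul_div_assoc, div_self hdne, mul_one]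
  refine ⟨L, by linarith, ?_, ?_, ?_⟩
  · -- (b)
    intro i hi
    rw [mem_sdiff] at hi
    have hty := hnotL i hi.2
    rw [ratio_d]
    rcases eq_or_lt_of_le (hx i).1 with hxi | hxi
    · have hyi : 0 < y i := by rw [← hxi, mul_zero] at hty; exact hty
      rw [ratio, if_pos hxi.symm, if_pos hyi]
      exact EReal.coe_lt_top t
    · rw [ratio, if_neg (ne_of_gt hxi)]
      exact EReal.coe_lt_coe_iff.2 ((lt_div_iff₀ hxi).2 (by linarith))
  · -- (c)
    intro i hi
    have hyi := (hL i).1 hi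
    rw [ratio_d]
    rcases eq_or_lt_of_le (hx i).1 with hxi | hxi
    · have hy0 : y i = 0 := by
        refine le_antisymm ?_ (hy i)
        rw [← hxi, mul_zero] at hyi; exact hyi
      rw [ratio, if_pos hxi.symm, hy0]
      norm_num
      exact ht
    · rw [ratio, if_neg (ne_of_gt hxi)]
      exact EReal.coe_le_coe_iff.2 ((div_le_iff₀ hxi).2 (by linarith))
  · -- the value of Psi
    by_cases hfin : ∀ i, x i = 0 → y i = 0
    · -- finite case
      have hxL : ∀ i, i ∉ L → 0 < x i := by
        intro i hi
        have h1 := hnotL i hi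
        rcases eq_or_lt_of_le (hx i).1 with h | h
        · exfalso
          have hy0 := hfin i h.symm
          rw [← h, mul_zero, hy0] at h1
          exact lt_irrefl 0 h1
        · exact h
      obtain ⟨αw, hαw, hval⟩ := stmt15_lower_val x y hx hy t ht L hL hd hyL hxL
      have hPsi : Psi x y
          = ((t^2 * (1 - ∑ i ∈ univ \ L, x i) + ∑ i ∈ univ \ L, (y i)^2 / x i : ℝ) : EReal) := by
        refine le_antisymm ?_ ?_
        · rw [Psi]
          exact iSup_le fun S => iSup_le fun α => iSup_le fun hα =>
            EReal.coe_le_coe_iff.2 (stmt15_upper x y hx hy hfin t ht L hL hd hyL hG S α hα)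
        · rw [Psi]
          refine le_iSup_of_le L (le_iSup_of_le αw (le_iSup_of_le hαw ?_))
          exact EReal.coe_le_coe_iff.2 (le_of_eq hval.symm)
      rw [hPsi]
      have h1 : ratio ((∑ i ∈ L, y i)^2) (1 - ∑ i ∈ univ \ L, x i)
          = ((t^2 * (1 - ∑ i ∈ univ \ L, x i) : ℝ) : EReal) := by
        rw [ratio, if_neg hdne]
        congr 1
        rw [hyL, div_eq_iff hdne]
        ring
      have h2 : ∑ i ∈ univ \ L, ratio ((y i)^2) (x i)
          = ((∑ i ∈ univ \ L, (y i)^2 / x i : ℝ) : EReal) := by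
        rw [stmt15_coe_finset_sum]
        exact Finset.sum_congr rfl fun i hi => by
          rw [mem_sdiff] at hi
          rw [ratio, if_neg (ne_of_gt (hxL i hi.2))]
      rw [h1, h2, ← EReal.coe_add]
    · -- infinite case
      push_neg at hfin
      obtain ⟨i0, hxi0, hyi0ne⟩ := hfin
      have hyi0 : 0 < y i0 := lt_of_le_of_ne (hy i0) (Ne.symm hyi0ne)
      have hPsiTop : Psi x y = ⊤ := by
        rw [EReal.eq_top_iff_forall_lt]
        intro r
        set c : ℝ := (|r| + 1) / (y i0) with hc
        have hc0 : 0 ≤ c := div_nonneg (by positivity) hyi0.le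
        set α0 : ι → ℝ := fun i => if i = i0 then c else 0 with hα0
        have hα0n : ∀ i, 0 ≤ α0 i := by
          intro i; rw [hα0]; dsimp only; split_ifs
          · exact hc0
          · exact le_refl 0
        have hmA0 : mAlpha α0 ∅ = 0 := by rw [mAlpha, Finset.fold_empty]
        have hval : -(mAlpha α0 ∅) ^ 2 / 4
            - (∑ i ∈ univ \ (∅ : Finset ι), max ((α0 i)^2 - (mAlpha α0 ∅)^2) 0 * x i / 4)
            + ∑ i, α0 i * y i = |r| + 1 := by
          rw [hmA0]
          have hp : ∑ i ∈ univ \ (∅ : Finset ι), max ((α0 i)^2 - 0^2) 0 * x i / 4 = 0 := by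
            refine Finset.sum_eq_zero fun i _ => ?_
            by_cases h : i = i0
            · subst h; rw [hxi0]; ring
            · rw [hα0]; dsimp only; rw [if_neg h]
              norm_num
          have hs : ∑ i, α0 i * y i = |r| + 1 := by
            have : ∀ i ∈ (univ : Finset ι), α0 i * y i = if i = i0 then c * y i else 0 := by
              intro i _
              rw [hα0]; dsimp only
              split_ifs with h
              · rfl
              · rw [zero_mul]
            rw [Finset.sum_congr rfl this, Finset.sum_ite_eq' univ i0 (fun i => c * y i)]
            rw [if_pos (mem_univ i0), hc]
            field_simp
          rw [hp, hs]
          ring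
        have hle : ((|r| + 1 : ℝ) : EReal) ≤ Psi x y := by
          rw [Psi]
          refine le_iSup_of_le ∅ (le_iSup_of_le α0 (le_iSup_of_le hα0n ?_))
          exact EReal.coe_le_coe_iff.2 (le_of_eq hval.symm)
        refine lt_of_lt_of_le ?_ hle
        exact EReal.coe_lt_coe_iff.2 (by cases abs_cases r <;> linarith)
      have hi0L : i0 ∉ L := by
        intro h
        have := (hL i0).1 h
        rw [hxi0, mul_zero] at this
        linarith
      have hterm : ratio ((y i0)^2) (x i0) = ⊤ := by
        rw [ratio, if_pos hxi0, if_pos (by positivity)]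
      have hnn : ∀ i ∈ univ \ L, (0 : EReal) ≤ ratio ((y i)^2) (x i) := by
        intro i _
        rw [ratio]
        split_ifs with h1 h2 h3
        · exact le_top
        · exact absurd h3 (not_lt.2 (sq_nonneg (y i)))
        · exact le_refl 0
        · exact EReal.coe_nonneg.2 (div_nonneg (sq_nonneg _) (hx i).1)
      have hsum_top : ∑ i ∈ univ \ L, ratio ((y i)^2) (x i) = ⊤ := by
        refine top_le_iff.1 ?_
        rw [← hterm]
        exact Finset.single_le_sum hnn (mem_sdiff.2 ⟨mem_univ _, hi0L⟩)
      have hrb : ratio ((∑ i ∈ L, y i)^2) (1 - ∑ i ∈ univ \ L, x i) ≠ ⊥ := by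
        rw [ratio, if_neg hdne]
        exact EReal.coe_ne_bot _
      rw [hsum_top, hPsiTop]
      exact (EReal.add_top_of_ne_bot hrb).symm

end
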